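/- Every irreducible finite-dimensional continuous complex representation of the real Weil group W_ℝ has dimension 1 or 2; up to equivalence these are the characters W(s,ε) = (Triv or sgn)⊗|·|^s for s ∈ ℂ, ε ∈ {0,1}, and the 2-dimensional representations V(s₁,s₂) with s₂ − s₁ ∈ ℕ positive. Moreover W(s,ε) is unitary iff s ∈ iℝ, and V(s₁,s₂) is unitary iff s₁ + s₂ ∈ iℝ. -/

import Mathlib

/-! ## The real Weil group

We model `W_ℝ` as pairs `(z, b)` with `z ∈ ℂˣ`, `b ∈ Bool`, where `(z, false)`
corresponds to `z ∈ ℂˣ ⊂ W_ℝ` and `(z, true)` to `z·j`; the relations are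
`j² = −1` and `j z j⁻¹ = z̄`. -/

/-- Complex conjugation on `ℂˣ`. -/
noncomputable def conjU : ℂˣ →* ℂˣ := Units.map (starRingEnd ℂ).toMonoidHom

@[simp] lemma conjU_conjU (v : ℂˣ) : conjU (conjU v) = v := by
  ext; simp [conjU]

@[simp] lemma conjU_neg_one : conjU (-1) = -1 := by
  ext; simp [conjU]

@[simp] lemma conjU_neg (u : ℂˣ) : conjU (-u) = -(conjU u) := by
  ext; simp [conjU]

/-- The real Weil group `W_ℝ`: the nonsplit extension of `ℤ/2` by `ℂˣ`, generated by
`ℂˣ` and an element `j` with `j² = −1` and `j z j⁻¹ = z̄`.  The element `⟨z, false⟩` is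
`z ∈ ℂˣ` and `⟨z, true⟩` is `z·j`. -/
structure WeilR where
  z : ℂˣ
  j : Bool

namespace WeilR

noncomputable instance : Mul WeilR :=
  ⟨fun g h => ⟨g.z * (if g.j then conjU h.z else h.z) * (if g.j && h.j then -1 else 1),
    xor g.j h.j⟩⟩

instance : One WeilR := ⟨⟨1, false⟩⟩

lemma mul_def (g h : WeilR) :
    g * h = ⟨g.z * (if g.j then conjU h.z else h.z) * (if g.j && h.j then -1 else 1),
      xor g.j h.j⟩ := rfl

lemma one_def : (1 : WeilR) = ⟨1, false⟩ := rfl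

noncomputable instance : Monoid WeilR where
  mul_assoc := by
    rintro ⟨z, a⟩ ⟨w, b⟩ ⟨v, c⟩
    cases a <;> cases b <;> cases c <;>
      simp [mul_def, WeilR.mk.injEq, map_mul, mul_assoc, mul_comm, mul_left_comm]
  one_mul := by rintro ⟨z, b⟩; cases b <;> simp [mul_def, one_def]
  mul_one := by rintro ⟨z, b⟩; cases b <;> simp [mul_def, one_def]

/-- The topology of `W_ℝ`, induced from `ℂˣ × Bool`. -/
noncomputable instance : TopologicalSpace WeilR :=
  TopologicalSpace.induced (fun g => (g.z, g.j)) inferInstance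

end WeilR

/-- The character `χ_{s₁,s₂} : z ↦ z^{s₁} z̄^{s₂} = |z|^{s₁+s₂} (z/|z|)^{s₁−s₂}` of `ℂˣ`,
where the integer `n` is `s₁ − s₂`. -/
noncomputable def chi (s₁ s₂ : ℂ) (n : ℤ) (z : ℂˣ) : ℂ :=
  ((‖(z : ℂ)‖ : ℂ)) ^ (s₁ + s₂) * ((z : ℂ) / (‖(z : ℂ)‖ : ℂ)) ^ n

/-- The one-dimensional character `W(s, ε) = (Triv or sgn) ⊗ |·|^s` of `W_ℝ`, where
`|·|` is the norm character (`|z| = z z̄`, `|j| = 1`) and `sgn` is the character trivial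
on the identity component (`ε = true` means `sgn`). -/
noncomputable def wchar (s : ℂ) (ε : Bool) (g : WeilR) : ℂ :=
  (((‖(g.z : ℂ)‖) ^ 2 : ℝ) : ℂ) ^ s * (if ε then (if g.j then -1 else 1) else 1)

/-- `ρ` is the induced representation `V(s₁,s₂) = Ind_{ℂˣ}^{W_ℝ}(χ_{s₁,s₂})` of `W_ℝ`
on `ℂ²` (with `n = s₁ − s₂ ∈ ℤ`), described by its action on the generators: `z ∈ ℂˣ`
acts diagonally by `(χ_{s₁,s₂}(z), χ_{s₂,s₁}(z))` and `j` acts by `(v₀,v₁) ↦ ((−1)ⁿ v₁, v₀)`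
(note `χ_{s₁,s₂}(−1) = (−1)ⁿ`). -/
def IsIndRep (s₁ s₂ : ℂ) (n : ℤ) (ρ : Representation ℂ WeilR (Fin 2 → ℂ)) : Prop :=
  (∀ (z : ℂˣ) (v : Fin 2 → ℂ),
      ρ ⟨z, false⟩ v = ![chi s₁ s₂ n z * v 0, chi s₂ s₁ (-n) z * v 1]) ∧
  (∀ v : Fin 2 → ℂ, ρ ⟨1, true⟩ v = ![(-1 : ℂ) ^ n * v 1, v 0])

/-- A representation is irreducible if its only invariant subspaces are `⊥` and `⊤`. -/
def RepIrreducible {G V : Type*} [Monoid G] [AddCommMonoid V] [Module ℂ V]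
    (ρ : Representation ℂ G V) : Prop :=
  ∀ U : Submodule ℂ V, (∀ g : G, ∀ v ∈ U, ρ g v ∈ U) → U = ⊥ ∨ U = ⊤

/-- Equivalence of representations: a linear isomorphism intertwining the actions. -/
def RepEquiv {G V W : Type*} [Monoid G] [AddCommMonoid V] [Module ℂ V]
    [AddCommMonoid W] [Module ℂ W]
    (ρ : Representation ℂ G V) (ρ' : Representation ℂ G W) : Prop :=
  ∃ e : V ≃ₗ[ℂ] W, ∀ (g : G) (v : V), e (ρ g v) = ρ' g (e v)

/-- A representation of `W_ℝ` on `ℂ^d` is unitarizable if it is equivalent to a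
representation preserving the standard hermitian inner product. -/
def IsUnitarizable {d : ℕ} (ρ : Representation ℂ WeilR (Fin d → ℂ)) : Prop :=
  ∃ T : (Fin d → ℂ) ≃ₗ[ℂ] EuclideanSpace ℂ (Fin d),
    ∀ (g : WeilR) (v w : Fin d → ℂ),
      (inner ℂ (T (ρ g v)) (T (ρ g w)) : ℂ) = inner ℂ (T v) (T w)


open Complex intervalIntegral

/-- continuous homs ℝ → ℂˣ are t ↦ exp (c t) -/
lemma exists_exp_of_hom (f : ℝ → ℂ) (hf : Continuous f) (h0 : f 0 = 1)
    (hmul : ∀ x y, f (x + y) = f x * f y) :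
    ∃ c : ℂ, ∀ t : ℝ, f t = Complex.exp (c * t) := by
  set L : ℝ → ℂ := fun t => ∫ s in (0:ℝ)..t, f s with hLdef
  have hInt : ∀ a b : ℝ, IntervalIntegrable f MeasureTheory.volume a b :=
    fun a b => hf.intervalIntegrable a b
  have hL : ∀ t : ℝ, HasDerivAt L (f t) t := fun t =>
    integral_hasDerivAt_right (hInt 0 t)
      (hf.stronglyMeasurableAtFilter _ _) hf.continuousAt
  -- find a with L a ≠ 0
  have hex : ∃ a : ℝ, L a ≠ 0 := by
    by_contra h
    push_neg at h
    have hconst : L = fun _ => 0 := funext h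
    have h1 : HasDerivAt L (0 : ℂ) 0 := by
      rw [hconst]; exact hasDerivAt_const _ _
    have := (hL 0).unique h1
    rw [h0] at this
    exact one_ne_zero this
  obtain ⟨a, ha⟩ := hex
  -- key identity
  have key : ∀ t : ℝ, f t * L a = L (t + a) - L t := by
    intro t
    have h1 : L (t + a) - L t = ∫ s in t..(t + a), f s := by
      rw [hLdef]
      have := integral_add_adjacent_intervals (hInt 0 t) (hInt t (t+a))
      simp only []
      rw [← this]; ring
    have h2 : (∫ s in t..(t + a), f s) = ∫ s in (0:ℝ)..a, f (t + s) := by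
      rw [integral_comp_add_left (fun x => f x) t]
      norm_num
    have h3 : (∫ s in (0:ℝ)..a, f (t + s)) = f t * L a := by
      simp_rw [hmul t]
      rw [integral_const_mul]
    rw [h1, h2, h3]
  have hft : ∀ t, f t = (L (t + a) - L t) * (L a)⁻¹ := by
    intro t
    field_simp
    exact key t
  set c : ℂ := (f a - 1) * (L a)⁻¹ with hc
  have hder : ∀ t : ℝ, HasDerivAt f (c * f t) t := by
    intro t
    have h1 : HasDerivAt (fun u => L (u + a)) (f (t + a)) t :=
      HasDerivAt.comp_add_const t a (hL (t + a))
    have h2 : HasDerivAt (fun u => (L (u + a) - L u) * (L a)⁻¹)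
        ((f (t + a) - f t) * (L a)⁻¹) t := (h1.sub (hL t)).mul_const _
    have h3 : (f (t + a) - f t) * (L a)⁻¹ = c * f t := by
      rw [hmul t a, hc]; ring
    rw [h3] at h2
    exact h2.congr_of_eventuallyEq (Filter.Eventually.of_forall fun u => hft u)
  -- uniqueness
  refine ⟨c, fun t => ?_⟩
  set g : ℝ → ℂ := fun t => f t * Complex.exp (-(c * t)) with hg
  have hgder : ∀ t : ℝ, HasDerivAt g 0 t := by
    intro t
    have he : HasDerivAt (fun t : ℝ => Complex.exp (-(c * t))) (-c * Complex.exp (-(c * t))) t := by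
      have h1 : HasDerivAt (fun t : ℝ => -(c * (t:ℂ))) (-c) t := by
        have h0 : HasDerivAt (fun t : ℝ => (t : ℂ)) 1 t := by
          exact (hasDerivAt_id t).ofReal_comp
        have := (h0.const_mul c).neg
        simp only [mul_one] at this
        exact this
      simpa [mul_comm] using h1.cexp
    have := (hder t).mul he
    convert this using 1
    · rfl
    · rfl
    ring
  have hgc : ∀ u : ℝ, g u = g 0 := by
    have hdiff : Differentiable ℝ g := fun u => (hgder u).differentiableAt
    have hdz : ∀ u, deriv g u = 0 := fun u => (hgder u).deriv
    intro u
    exact is_const_of_deriv_eq_zero hdiff hdz u 0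
  have := hgc t
  simp only [hg, h0] at this
  simp only [Complex.ofReal_zero, mul_zero, neg_zero, Complex.exp_zero, mul_one, one_mul] at this
  have hne : Complex.exp (-(c * t)) ≠ 0 := Complex.exp_ne_zero _
  field_simp [Complex.exp_neg] at this
  have hee : Complex.exp (-(c * t)) * Complex.exp (c * t) = 1 := by
    rw [← Complex.exp_add]; simp
  linear_combination (Complex.exp (c * t)) * this - f t * hee



noncomputable def uexp (w : ℂ) : ℂˣ := Units.mk0 (Complex.exp w) (Complex.exp_ne_zero w)

@[simp] lemma uexp_val (w : ℂ) : ((uexp w : ℂˣ) : ℂ) = Complex.exp w := rfl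

lemma uexp_add (w w' : ℂ) : uexp (w + w') = uexp w * uexp w' := by
  ext; simp [uexp, Complex.exp_add]

lemma uexp_zero : uexp 0 = 1 := by ext; simp [uexp]

lemma continuous_uexp_comp {f : ℝ → ℂ} (hf : Continuous f) :
    Continuous fun t : ℝ => uexp (f t) := by
  rw [Units.continuous_iff]
  constructor
  · exact Complex.continuous_exp.comp hf
  · have : (fun t : ℝ => ((uexp (f t))⁻¹ : ℂˣ) : ℝ → ℂ) = fun t => Complex.exp (-(f t)) := by
      funext t
      simp [uexp, Complex.exp_neg]
    rw [this]
    exact Complex.continuous_exp.comp hf.neg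

/-- classification of continuous characters of ℂˣ -/
lemma char_classification (χ : ℂˣ → ℂ) (hχ : Continuous χ) (h1 : χ 1 = 1)
    (hmul : ∀ z w, χ (z * w) = χ z * χ w) :
    ∃ (c : ℂ) (n : ℤ),
      (∀ z : ℂˣ, χ z = ((‖(z : ℂ)‖ : ℂ)) ^ c *
        ((z : ℂ) / (‖(z : ℂ)‖ : ℂ)) ^ n) ∧
      (∀ θ : ℝ, χ (uexp (θ * I)) = Complex.exp ((n : ℂ) * I * θ)) := by
  obtain ⟨c₁, hc₁⟩ := exists_exp_of_hom (fun t => χ (uexp t))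
    (hχ.comp (continuous_uexp_comp Complex.continuous_ofReal))
    (by simpa [uexp_zero] using h1)
    (fun x y => by rw [← hmul, ← uexp_add]; push_cast; ring_nf)
  obtain ⟨c₂, hc₂⟩ := exists_exp_of_hom (fun t => χ (uexp (t * I)))
    (hχ.comp (continuous_uexp_comp (by continuity)))
    (by simpa [uexp_zero] using h1)
    (fun x y => by rw [← hmul, ← uexp_add]; push_cast; ring_nf)
  have hper : Complex.exp (c₂ * ((2 * Real.pi : ℝ) : ℂ)) = 1 := by
    have h := hc₂ (2 * Real.pi)
    have huexp1 : uexp (((2 * Real.pi : ℝ) : ℂ) * I) = 1 := by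
      ext
      simp only [uexp_val, Units.val_one]
      push_cast
      exact Complex.exp_two_pi_mul_I
    rw [huexp1, h1] at h
    exact h.symm
  obtain ⟨n, hn⟩ := Complex.exp_eq_one_iff.mp hper
  have h2pi : ((2 * Real.pi : ℝ) : ℂ) ≠ 0 := by
    simp [Real.pi_ne_zero]
  have hc₂' : c₂ = n * I := by
    apply mul_right_cancel₀ h2pi
    rw [hn]
    push_cast
    ring
  have hθ : ∀ θ : ℝ, χ (uexp (θ * I)) = Complex.exp ((n : ℂ) * I * θ) := by
    intro θ
    rw [hc₂ θ, hc₂']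
  refine ⟨c₁, n, ?_, hθ⟩
  intro z
  have hz0 : (z : ℂ) ≠ 0 := z.ne_zero
  have habs : (0:ℝ) < ‖(z:ℂ)‖ := norm_pos_iff.mpr hz0
  -- decompose z
  have hdecomp : z = uexp (Real.log (‖(z:ℂ)‖)) * uexp ((Complex.arg (z:ℂ) : ℂ) * I) := by
    ext
    simp only [Units.val_mul, uexp_val]
    rw [← Complex.ofReal_exp, Real.exp_log habs]
    exact (Complex.norm_mul_exp_arg_mul_I (z:ℂ)).symm
  have hval : χ z = Complex.exp (c₁ * Real.log (‖(z:ℂ)‖)) *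
      Complex.exp ((n:ℂ) * I * Complex.arg (z:ℂ)) := by
    conv_lhs => rw [hdecomp]
    rw [hmul, hc₁, hθ]
  rw [hval]
  congr 1
  · -- exp (c₁ log |z|) = |z| ^ c₁
    rw [Complex.cpow_def_of_ne_zero (by exact_mod_cast habs.ne')]
    rw [← Complex.ofReal_log habs.le]
    ring_nf
  · -- exp (n I arg) = (z/|z|)^n
    have hzdiv : (z:ℂ) / (‖(z:ℂ)‖ : ℂ) = Complex.exp (Complex.arg (z:ℂ) * I) := by
      rw [div_eq_iff (by exact_mod_cast habs.ne')]
      rw [mul_comm]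
      exact (Complex.norm_mul_exp_arg_mul_I (z:ℂ)).symm
    rw [hzdiv, ← Complex.exp_int_mul]
    congr 1
    ring


open Module

lemma exists_common_eigenvector_aux (k : ℕ) :
    ∀ (V : Type) [AddCommGroup V] [Module ℂ V] [FiniteDimensional ℂ V],
      Module.finrank ℂ V = k → Nontrivial V →
      ∀ S : Set (Module.End ℂ V), (∀ A ∈ S, ∀ B ∈ S, A * B = B * A) →
      ∃ v : V, v ≠ 0 ∧ ∀ A ∈ S, ∃ μ : ℂ, A v = μ • v := by
  induction k using Nat.strong_induction_on with
  | _ k IH =>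
    intro V _ _ _ hrank hnt S hcomm
    by_cases hscal : ∀ A ∈ S, ∃ μ : ℂ, ∀ x : V, A x = μ • x
    · obtain ⟨v, hv⟩ := exists_ne (0 : V)
      exact ⟨v, hv, fun A hA => (hscal A hA).imp fun μ hμ => hμ v⟩
    · push_neg at hscal
      obtain ⟨A₀, hA₀S, hA₀⟩ := hscal
      obtain ⟨μ, hμ⟩ := Module.End.exists_eigenvalue A₀
      set W : Submodule ℂ V := Module.End.eigenspace A₀ μ with hW
      have hWbot : W ≠ ⊥ := hμ
      have hWtop : W ≠ ⊤ := by
        intro htop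
        apply absurd (hA₀ μ)
        push_neg
        intro x
        have : x ∈ W := htop ▸ Submodule.mem_top
        exact Module.End.mem_eigenspace_iff.mp this
      have hinv : ∀ B ∈ S, ∀ x ∈ W, B x ∈ W := by
        intro B hB x hx
        rw [hW, Module.End.mem_eigenspace_iff] at hx ⊢
        have hcommapp : A₀ (B x) = B (A₀ x) := by
          have := hcomm A₀ hA₀S B hB
          calc A₀ (B x) = (A₀ * B) x := rfl
            _ = (B * A₀) x := by rw [this]
            _ = B (A₀ x) := rfl
        rw [hcommapp, hx, map_smul]
      have hntW : Nontrivial W := Submodule.nontrivial_iff_ne_bot.mpr hWbot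
      have hlt : finrank ℂ W < k := by
        rw [← hrank]
        exact Submodule.finrank_lt hWtop
      set S' : Set (Module.End ℂ W) :=
        {C | ∃ B : Module.End ℂ V, ∃ hB : B ∈ S,
          C = LinearMap.restrict B (fun x hx => hinv B hB x hx)} with hS'
      have hcomm' : ∀ C ∈ S', ∀ C' ∈ S', C * C' = C' * C := by
        rintro C ⟨B, hB, rfl⟩ C' ⟨B', hB', rfl⟩
        ext x
        have := hcomm B hB B' hB'
        have happ : B (B' x) = B' (B x) := by
          calc B (B' (x:V)) = (B * B') x := rfl
            _ = (B' * B) x := by rw [this]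
            _ = B' (B x) := rfl
        simp only [Module.End.mul_apply, LinearMap.restrict_coe_apply]
        exact happ
      obtain ⟨w, hw0, hweig⟩ := IH (finrank ℂ W) hlt W rfl hntW S' hcomm'
      refine ⟨(w : V), by simpa using hw0, ?_⟩
      intro B hB
      obtain ⟨ν, hν⟩ := hweig (LinearMap.restrict B (fun x hx => hinv B hB x hx))
        ⟨B, hB, rfl⟩
      refine ⟨ν, ?_⟩
      have := congrArg (Subtype.val) hν
      simpa [LinearMap.restrict_apply] using this



open Complex

lemma abs_chi (s₁ s₂ : ℂ) (n : ℤ) (z : ℂˣ) :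
    ‖(chi s₁ s₂ n z)‖ = (‖(z : ℂ)‖) ^ (s₁ + s₂).re := by
  have hz : (z : ℂ) ≠ 0 := z.ne_zero
  have habs : (0:ℝ) < ‖(z:ℂ)‖ := norm_pos_iff.mpr hz
  rw [chi, norm_mul, Complex.norm_cpow_eq_rpow_re_of_pos habs]
  have h1 : ‖(((z:ℂ) / (‖(z:ℂ)‖ : ℂ)) ^ n)‖ = 1 := by
    rw [norm_zpow, norm_div]
    rw [Complex.norm_real, Real.norm_of_nonneg habs.le, div_self habs.ne']
    exact one_zpow n
  rw [h1, mul_one]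

lemma conj_mul_self_of_abs_one {a : ℂ} (h : ‖a‖ = 1) :
    (starRingEnd ℂ) a * a = 1 := by
  rw [mul_comm, Complex.mul_conj, Complex.normSq_eq_norm_sq, h]
  norm_num

lemma abs_eq_one_of_conj_mul_self {a : ℂ} (h : (starRingEnd ℂ) a * a = 1) :
    ‖a‖ = 1 := by
  have : ((Complex.normSq a : ℝ) : ℂ) = 1 := by rw [← Complex.mul_conj, mul_comm]; exact h
  have h2 : Complex.normSq a = 1 := by exact_mod_cast this
  have := Complex.normSq_eq_norm_sq a
  rw [h2] at this
  have habs : (0:ℝ) ≤ ‖a‖ := norm_nonneg _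
  nlinarith

lemma rpow_eq_one_imp {b x : ℝ} (hb : 1 < b) (h : b ^ x = 1) : x = 0 := by
  have hb0 : (0:ℝ) < b := lt_trans one_pos hb
  have := congrArg Real.log h
  rw [Real.log_rpow hb0, Real.log_one] at this
  rcases mul_eq_zero.mp this with h' | h'
  · exact h'
  · exact absurd h' (Real.log_pos hb).ne'

lemma abs_wchar {s : ℂ} (hs : s.re = 0) (ε : Bool) (g : WeilR) :
    ‖(wchar s ε g)‖ = 1 := by
  have hz : ((g.z : ℂ)) ≠ 0 := g.z.ne_zero
  have habs : (0:ℝ) < ‖(g.z:ℂ)‖ := norm_pos_iff.mpr hz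
  have hsq : (0:ℝ) < (‖(g.z:ℂ)‖)^2 := by positivity
  rw [wchar, norm_mul, Complex.norm_cpow_eq_rpow_re_of_pos hsq, hs, Real.rpow_zero]
  cases ε <;> cases hj : g.j <;> simp

lemma wchar_two (s : ℂ) (ε : Bool) :
    wchar s ε ⟨Units.mk0 2 two_ne_zero, false⟩ = ((4:ℝ):ℂ) ^ s := by
  rw [wchar]
  norm_num

/-- Part C -/
lemma partC (s : ℂ) (ε : Bool) (ρ₁ : Representation ℂ WeilR (Fin 1 → ℂ))
    (hform : ∀ (g : WeilR) (v : Fin 1 → ℂ), ρ₁ g v = wchar s ε g • v) :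
    IsUnitarizable ρ₁ ↔ s.re = 0 := by
  constructor
  · rintro ⟨T, hT⟩
    set g₀ : WeilR := ⟨Units.mk0 2 two_ne_zero, false⟩ with hg₀
    set v : Fin 1 → ℂ := fun _ => 1 with hvdef
    have hv : v ≠ 0 := by
      intro h
      have := congrFun h 0
      simp [hvdef] at this
    have h := hT g₀ v v
    rw [hform g₀ v, map_smul, inner_smul_left, inner_smul_right] at h
    have hTv : (inner ℂ (T v) (T v) : ℂ) ≠ 0 := by
      rw [Ne, inner_self_eq_zero]
      intro h'
      exact hv (by simpa using (map_eq_zero_iff T T.injective).mp h')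
    have hkey : (starRingEnd ℂ) (wchar s ε g₀) * wchar s ε g₀ = 1 := by
      have h' : ((starRingEnd ℂ) (wchar s ε g₀) * wchar s ε g₀ - 1) * (inner ℂ (T v) (T v) : ℂ) = 0 := by
        rw [sub_mul, one_mul, mul_assoc, h]
        ring
      rcases mul_eq_zero.mp h' with h'' | h''
      · linear_combination h''
      · exact absurd h'' hTv
    have habs := abs_eq_one_of_conj_mul_self hkey
    rw [wchar_two] at habs
    rw [Complex.norm_cpow_eq_rpow_re_of_pos (by norm_num : (0:ℝ) < 4)] at habs
    exact rpow_eq_one_imp (by norm_num) habs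
  · intro hs
    refine ⟨(WithLp.linearEquiv 2 ℂ (Fin 1 → ℂ)).symm, fun g v w => ?_⟩
    rw [hform g v, hform g w, map_smul, map_smul, inner_smul_left, inner_smul_right,
      ← mul_assoc, conj_mul_self_of_abs_one (abs_wchar hs ε g), one_mul]

lemma WeilR.ff_mul (z w : ℂˣ) : (⟨z,false⟩ : WeilR) * ⟨w,false⟩ = ⟨z*w,false⟩ := by
  simp [WeilR.mul_def]

lemma WeilR.f_mul_j (z : ℂˣ) : (⟨z,false⟩ : WeilR) * ⟨1,true⟩ = ⟨z,true⟩ := by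
  simp [WeilR.mul_def]

lemma WeilR.j_mul_f (w : ℂˣ) : (⟨1,true⟩ : WeilR) * ⟨w,false⟩ = ⟨conjU w,true⟩ := by
  simp [WeilR.mul_def]

lemma WeilR.j_mul_j : (⟨1,true⟩ : WeilR) * ⟨1,true⟩ = ⟨-1,false⟩ := by
  simp [WeilR.mul_def]

/-- Part D -/
lemma partD (s₁ s₂ : ℂ) (n : ℤ) (hn : (n:ℂ) = s₁ - s₂) (hneg : n < 0)
    (ρ' : Representation ℂ WeilR (Fin 2 → ℂ)) (hind : IsIndRep s₁ s₂ n ρ') :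
    IsUnitarizable ρ' ↔ (s₁ + s₂).re = 0 := by
  constructor
  · rintro ⟨T, hT⟩
    set u₂ : ℂˣ := Units.mk0 2 two_ne_zero with hu₂
    set v : Fin 2 → ℂ := ![1, 0] with hvdef
    have hv : v ≠ 0 := by
      intro h
      have := congrFun h 0
      simp [hvdef] at this
    have hsm : ρ' ⟨u₂, false⟩ v = chi s₁ s₂ n u₂ • v := by
      rw [hind.1]
      funext i
      fin_cases i <;> simp [hvdef]
    have h := hT ⟨u₂, false⟩ v v
    rw [hsm, map_smul, inner_smul_left, inner_smul_right] at h
    have hTv : (inner ℂ (T v) (T v) : ℂ) ≠ 0 := by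
      rw [Ne, inner_self_eq_zero]
      intro h'
      exact hv (by simpa using (map_eq_zero_iff T T.injective).mp h')
    have hkey : (starRingEnd ℂ) (chi s₁ s₂ n u₂) * chi s₁ s₂ n u₂ = 1 := by
      have h' : ((starRingEnd ℂ) (chi s₁ s₂ n u₂) * chi s₁ s₂ n u₂ - 1)
          * (inner ℂ (T v) (T v) : ℂ) = 0 := by
        rw [sub_mul, one_mul, mul_assoc, h]
        ring
      rcases mul_eq_zero.mp h' with h'' | h''
      · linear_combination h''
      · exact absurd h'' hTv
    have habs := abs_eq_one_of_conj_mul_self hkey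
    rw [abs_chi] at habs
    have h2 : ‖((u₂ : ℂ))‖ = 2 := by
      rw [hu₂]
      simp
    rw [h2] at habs
    exact rpow_eq_one_imp (by norm_num) habs
  · intro hs
    set T := (WithLp.linearEquiv 2 ℂ (Fin 2 → ℂ)).symm with hTdef
    have hinner : ∀ x y : Fin 2 → ℂ,
        (inner ℂ (T x) (T y) : ℂ) = (starRingEnd ℂ) (x 0) * y 0 + (starRingEnd ℂ) (x 1) * y 1 := by
      intro x y
      rw [PiLp.inner_apply, Fin.sum_univ_two, RCLike.inner_apply', RCLike.inner_apply']
      rfl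
    have hchi1 : ∀ z : ℂˣ, (starRingEnd ℂ) (chi s₁ s₂ n z) * chi s₁ s₂ n z = 1 := by
      intro z
      refine conj_mul_self_of_abs_one ?_
      rw [abs_chi, hs, Real.rpow_zero]
    have hchi2 : ∀ z : ℂˣ, (starRingEnd ℂ) (chi s₂ s₁ (-n) z) * chi s₂ s₁ (-n) z = 1 := by
      intro z
      refine conj_mul_self_of_abs_one ?_
      rw [abs_chi]
      rw [show (s₂ + s₁) = s₁ + s₂ by ring, hs, Real.rpow_zero]
    have hm1 : (starRingEnd ℂ) ((-1 : ℂ) ^ n) * (-1 : ℂ) ^ n = 1 := by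
      refine conj_mul_self_of_abs_one ?_
      rw [norm_zpow]
      simp
    have hgen0 : ∀ (z : ℂˣ) (x y : Fin 2 → ℂ),
        (inner ℂ (T (ρ' ⟨z, false⟩ x)) (T (ρ' ⟨z, false⟩ y)) : ℂ) = inner ℂ (T x) (T y) := by
      intro z x y
      rw [hind.1 z x, hind.1 z y, hinner, hinner]
      simp only [Matrix.cons_val_zero, Matrix.cons_val_one, Matrix.head_cons, map_mul]
      linear_combination ((starRingEnd ℂ) (x 0) * y 0) * hchi1 z
        + ((starRingEnd ℂ) (x 1) * y 1) * hchi2 z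
    have hgenj : ∀ x y : Fin 2 → ℂ,
        (inner ℂ (T (ρ' ⟨1, true⟩ x)) (T (ρ' ⟨1, true⟩ y)) : ℂ) = inner ℂ (T x) (T y) := by
      intro x y
      rw [hind.2 x, hind.2 y, hinner, hinner]
      simp only [Matrix.cons_val_zero, Matrix.cons_val_one, Matrix.head_cons, map_mul]
      linear_combination ((starRingEnd ℂ) (x 1) * y 1) * hm1
    refine ⟨T, fun g x y => ?_⟩
    obtain ⟨z, b⟩ := g
    cases b
    · exact hgen0 z x y
    · have hsplit : (⟨z, true⟩ : WeilR) = ⟨z, false⟩ * ⟨1, true⟩ := (WeilR.f_mul_j z).symm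
      rw [hsplit, map_mul, Module.End.mul_apply, Module.End.mul_apply, hgen0, hgenj]


@[simp] lemma conjU_val (z : ℂˣ) : ((conjU z : ℂˣ) : ℂ) = (starRingEnd ℂ) (z : ℂ) := rfl

@[simp] lemma conjU_abs (z : ℂˣ) : ‖((conjU z : ℂˣ) : ℂ)‖ = ‖(z : ℂ)‖ := by
  rw [conjU_val, Complex.norm_conj]

noncomputable def cchar (c : ℂ) (n : ℤ) (z : ℂˣ) : ℂ :=
  ((‖(z : ℂ)‖ : ℂ)) ^ c * ((z : ℂ) / (‖(z : ℂ)‖ : ℂ)) ^ n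

lemma cchar_conj (c : ℂ) (n : ℤ) (z : ℂˣ) :
    cchar c n (conjU z) = cchar c (-n) z := by
  rw [cchar, cchar, conjU_abs, conjU_val]
  congr 1
  have hz : (z : ℂ) ≠ 0 := z.ne_zero
  have habs : (0:ℝ) < ‖(z:ℂ)‖ := norm_pos_iff.mpr hz
  have habs1 : ‖((z:ℂ) / (‖(z:ℂ)‖ : ℂ))‖ = 1 := by
    rw [norm_div, Complex.norm_real, Real.norm_of_nonneg habs.le, div_self habs.ne']
  have hconj : (starRingEnd ℂ) ((z:ℂ)) / (‖(z:ℂ)‖ : ℂ)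
      = (((z:ℂ) / (‖(z:ℂ)‖ : ℂ)))⁻¹ := by
    have h1 : ((z:ℂ) / (‖(z:ℂ)‖ : ℂ)) *
        ((starRingEnd ℂ) ((z:ℂ)) / (‖(z:ℂ)‖ : ℂ)) = 1 := by
      have hm : (starRingEnd ℂ) ((z:ℂ) / (‖(z:ℂ)‖ : ℂ))
          = (starRingEnd ℂ) ((z:ℂ)) / (‖(z:ℂ)‖ : ℂ) := by
        rw [map_div₀, Complex.conj_ofReal]
      rw [← hm, Complex.mul_conj, Complex.normSq_eq_norm_sq, habs1]
      norm_num
    exact eq_inv_of_mul_eq_one_left (by rw [mul_comm]; exact h1)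
  rw [hconj, inv_zpow, ← zpow_neg]

lemma cchar_neg_one (c : ℂ) (n : ℤ) : cchar c n (-1) = (-1 : ℂ) ^ n := by
  rw [cchar]
  simp

lemma cchar_ne_zero_neg_one (c : ℂ) (n : ℤ) : cchar c n (-1) ≠ 0 := by
  rw [cchar_neg_one]
  exact zpow_ne_zero n (by norm_num)

/-- Core construction: from an eigenvector with character `cchar c n` whose `j`-translate is
independent, build the induced representation structure. -/
lemma build_ind (ρ : Representation ℂ WeilR (Fin 2 → ℂ)) (c : ℂ) (n : ℤ)
    (v : Fin 2 → ℂ)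
    (hχv : ∀ z : ℂˣ, ρ ⟨z, false⟩ v = cchar c n z • v)
    (hpair : ∀ a b : ℂ, a • v + b • (ρ ⟨1, true⟩ v) = 0 → a = 0 ∧ b = 0) :
    ∃ s₁ s₂ : ℂ, (n : ℂ) = s₁ - s₂ ∧
      ∃ ρ' : Representation ℂ WeilR (Fin 2 → ℂ), IsIndRep s₁ s₂ n ρ' ∧ RepEquiv ρ ρ' := by
  classical
  set w : Fin 2 → ℂ := ρ ⟨1, true⟩ v with hwdef
  set χ : ℂˣ → ℂ := cchar c n with hχdef
  -- relations
  have hρzw : ∀ z : ℂˣ, ρ ⟨z, false⟩ w = χ (conjU z) • w := by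
    intro z
    have h1 : (⟨z, false⟩ : WeilR) * ⟨1, true⟩ = ⟨1, true⟩ * ⟨conjU z, false⟩ := by
      rw [WeilR.f_mul_j, WeilR.j_mul_f, conjU_conjU]
    calc ρ ⟨z, false⟩ w = (ρ ⟨z, false⟩ * ρ ⟨1, true⟩) v := rfl
      _ = ρ (⟨z, false⟩ * ⟨1, true⟩) v := by rw [map_mul]
      _ = ρ (⟨1, true⟩ * ⟨conjU z, false⟩) v := by rw [h1]
      _ = ρ ⟨1, true⟩ (ρ ⟨conjU z, false⟩ v) := by rw [map_mul]; rfl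
      _ = χ (conjU z) • w := by rw [hχv, map_smul]
  have hρjw : ρ ⟨1, true⟩ w = χ (-1) • v := by
    calc ρ ⟨1, true⟩ w = ρ (⟨1, true⟩ * ⟨1, true⟩) v := by rw [map_mul]; rfl
      _ = ρ ⟨-1, false⟩ v := by rw [WeilR.j_mul_j]
      _ = χ (-1) • v := hχv (-1)
  -- the linear equivalence
  set f : (Fin 2 → ℂ) →ₗ[ℂ] (Fin 2 → ℂ) :=
    (LinearMap.proj 0).smulRight v + (LinearMap.proj 1).smulRight w with hfdef
  have hfapply : ∀ u : Fin 2 → ℂ, f u = u 0 • v + u 1 • w := by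
    intro u
    simp [hfdef]
  have hfinj : Function.Injective f := by
    intro x y hxy
    have h0 : f (x - y) = 0 := by rw [map_sub, hxy, sub_self]
    rw [hfapply] at h0
    have := hpair ((x - y) 0) ((x - y) 1) (by simpa using h0)
    funext i
    fin_cases i
    · have h1 := this.1
      simp only [Pi.sub_apply] at h1
      exact sub_eq_zero.mp h1
    · have h1 := this.2
      simp only [Pi.sub_apply] at h1
      exact sub_eq_zero.mp h1
  have hfbij : Function.Bijective f :=
    ⟨hfinj, (LinearMap.injective_iff_surjective).mp hfinj⟩
  set e : (Fin 2 → ℂ) ≃ₗ[ℂ] (Fin 2 → ℂ) := (LinearEquiv.ofBijective f hfbij).symm with hedef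
  have hesymm : ∀ u, e.symm u = f u := by
    intro u
    rw [hedef, LinearEquiv.symm_symm, LinearEquiv.ofBijective_apply]
  have hef : ∀ u, e (f u) = u := by
    intro u
    rw [hedef]
    exact (LinearEquiv.ofBijective f hfbij).symm_apply_apply u
  -- the transported representation
  set ρ' : Representation ℂ WeilR (Fin 2 → ℂ) :=
    { toFun := fun g => e.toLinearMap ∘ₗ (ρ g) ∘ₗ e.symm.toLinearMap,
      map_one' := by ext u; simp
      map_mul' := by
        intro g h
        ext u
        simp [Module.End.mul_apply] } with hρ'def
  have hρ'apply : ∀ (g : WeilR) (u : Fin 2 → ℂ), ρ' g u = e (ρ g (e.symm u)) := by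
    intro g u
    rfl
  refine ⟨(c + n) / 2, (c - n) / 2, by ring, ρ', ⟨?_, ?_⟩, ⟨e, ?_⟩⟩
  · -- action of ℂˣ
    intro z u
    have hchi1 : chi ((c + n)/2) ((c - n)/2) n z = χ z := by
      rw [chi, hχdef, cchar, show (c + n)/2 + (c - n)/2 = c by ring]
    have hchi2 : chi ((c - n)/2) ((c + n)/2) (-n) z = χ (conjU z) := by
      rw [chi, hχdef, cchar_conj, cchar, show (c - n)/2 + (c + n)/2 = c by ring]
    rw [hρ'apply, hesymm, hfapply]
    have h2 : ρ ⟨z, false⟩ (u 0 • v + u 1 • w) = f ![χ z * u 0, χ (conjU z) * u 1] := by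
      rw [map_add, map_smul, map_smul, hχv, hρzw, hfapply]
      simp only [Matrix.cons_val_zero, Matrix.cons_val_one, Matrix.head_cons]
      rw [smul_smul, smul_smul, mul_comm (u 0), mul_comm (u 1)]
    rw [h2, hef, hchi1, hchi2]
  · -- action of j
    intro u
    have hm1 : χ (-1) = (-1 : ℂ) ^ n := cchar_neg_one c n
    rw [hρ'apply, hesymm, hfapply]
    have h2 : ρ ⟨1, true⟩ (u 0 • v + u 1 • w) = f ![χ (-1) * u 1, u 0] := by
      rw [map_add, map_smul, map_smul, ← hwdef, hρjw, hfapply]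
      simp only [Matrix.cons_val_zero, Matrix.cons_val_one, Matrix.head_cons]
      rw [smul_smul, mul_comm (u 1)]
      abel
    rw [h2, hef, hm1]
  · -- intertwining
    intro g x
    rw [hρ'apply]
    congr 1
    rw [LinearEquiv.symm_apply_apply]


open Module

lemma continuous_mkfalse : Continuous fun z : ℂˣ => (⟨z, false⟩ : WeilR) := by
  rw [continuous_induced_rng]
  exact continuous_id.prodMk continuous_const

lemma conjU_uexp (θ : ℝ) : conjU (uexp ((θ:ℂ) * I)) = uexp (((-θ : ℝ):ℂ) * I) := by
  ext
  rw [conjU_val, uexp_val, uexp_val, ← Complex.exp_conj]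
  congr 1
  simp

lemma span_invariant {d : ℕ} (ρ : Representation ℂ WeilR (Fin d → ℂ))
    (xs : Set (Fin d → ℂ))
    (h : ∀ g : WeilR, ∀ x ∈ xs, ρ g x ∈ Submodule.span ℂ xs) :
    ∀ g : WeilR, ∀ x ∈ Submodule.span ℂ xs, ρ g x ∈ Submodule.span ℂ xs := by
  intro g x hx
  induction hx using Submodule.span_induction with
  | mem x hxs => exact h g x hxs
  | zero => rw [map_zero]; exact Submodule.zero_mem _
  | add x y _ _ hx hy => rw [map_add]; exact Submodule.add_mem _ hx hy
  | smul a x _ hx => rw [map_smul]; exact Submodule.smul_mem _ a hx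

lemma cpow_sq_half (x : ℝ) (hx : 0 < x) (c : ℂ) :
    (((x^2 : ℝ)) : ℂ) ^ (c / 2) = ((x : ℝ) : ℂ) ^ c := by
  have hx2 : ((x^2 : ℝ) : ℂ) ≠ 0 := by
    exact_mod_cast (pow_pos hx 2).ne'
  have hxc : ((x : ℝ) : ℂ) ≠ 0 := by exact_mod_cast hx.ne'
  rw [Complex.cpow_def_of_ne_zero hx2, Complex.cpow_def_of_ne_zero hxc,
    ← Complex.ofReal_log (pow_pos hx 2).le, ← Complex.ofReal_log hx.le,
    Real.log_pow]
  congr 1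
  push_cast
  ring

/-- The classification core. -/
lemma classification (d : ℕ) (ρ : Representation ℂ WeilR (Fin d → ℂ))
    (hcont : Continuous fun p : WeilR × (Fin d → ℂ) => ρ p.1 p.2)
    (hirr : RepIrreducible ρ) (hd : 0 < d) :
    (d = 1 ∨ d = 2) ∧
    ((∃ (s : ℂ) (ε : Bool), ∀ (g : WeilR) (v : Fin d → ℂ), ρ g v = wchar s ε g • v) ∨
      (∃ (s₁ s₂ : ℂ) (n : ℤ), (n : ℂ) = s₁ - s₂ ∧ n < 0 ∧
        ∃ ρ' : Representation ℂ WeilR (Fin 2 → ℂ),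
          IsIndRep s₁ s₂ n ρ' ∧ RepEquiv ρ ρ')) := by
  classical
  haveI : Nonempty (Fin d) := ⟨⟨0, hd⟩⟩
  -- common eigenvector
  obtain ⟨v, hv0, hveig⟩ := exists_common_eigenvector_aux (finrank ℂ (Fin d → ℂ))
    (Fin d → ℂ) rfl inferInstance
    (Set.range fun z : ℂˣ => ρ ⟨z, false⟩)
    (by
      rintro A ⟨z, rfl⟩ B ⟨y, rfl⟩
      rw [← map_mul, ← map_mul, WeilR.ff_mul, WeilR.ff_mul, mul_comm z y])
  have hz : ∀ z : ℂˣ, ∃ μ : ℂ, ρ ⟨z, false⟩ v = μ • v := fun z => hveig _ ⟨z, rfl⟩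
  set χ : ℂˣ → ℂ := fun z => Classical.choose (hz z) with hχdef
  have hχ : ∀ z : ℂˣ, ρ ⟨z, false⟩ v = χ z • v := fun z => Classical.choose_spec (hz z)
  have hcan : ∀ a b : ℂ, a • v = b • v → a = b := by
    intro a b h
    by_contra hne
    apply hv0
    have h1 : (a - b) • v = 0 := by rw [sub_smul, h, sub_self]
    rcases smul_eq_zero.mp h1 with h2 | h2
    · exact absurd (sub_eq_zero.mp h2) hne
    · exact absurd h2 fun _ => hne (False.elim (hv0 h2))
  have hχmul : ∀ z y : ℂˣ, χ (z * y) = χ z * χ y := by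
    intro z y
    apply hcan
    rw [← hχ, ← WeilR.ff_mul, map_mul, Module.End.mul_apply, hχ y, map_smul, hχ z,
      smul_smul, mul_comm (χ z)]
  have hχ1 : χ 1 = 1 := by
    apply hcan
    rw [← hχ 1]
    have h1 : ((⟨1, false⟩ : WeilR)) = 1 := rfl
    rw [h1, map_one, one_smul]
    rfl
  -- continuity of χ
  obtain ⟨i₀, hi₀⟩ := Function.ne_iff.mp hv0
  have hvi₀ : v i₀ ≠ 0 := by simpa using hi₀
  have hχcont : Continuous χ := by
    have hχeq : χ = fun z => (ρ ⟨z, false⟩ v) i₀ / v i₀ := by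
      funext z
      rw [hχ z]
      simp only [Pi.smul_apply, smul_eq_mul]
      field_simp
    rw [hχeq]
    apply Continuous.div_const
    exact (continuous_apply i₀).comp
      (hcont.comp ((continuous_mkfalse).prodMk continuous_const))
  obtain ⟨c, n, hform, hθform⟩ := char_classification χ hχcont hχ1 hχmul
  have hform' : ∀ z : ℂˣ, χ z = cchar c n z := hform
  -- the j-translate
  set jW : WeilR := ⟨1, true⟩ with hjW
  set w : Fin d → ℂ := ρ jW v with hwdef
  have hk : (⟨-1, false⟩ : WeilR) * ⟨-1, false⟩ = 1 := by
    rw [WeilR.ff_mul]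
    norm_num
    rfl
  have hw0 : w ≠ 0 := by
    intro hw
    apply hv0
    have h1 : ρ (⟨-1, false⟩ : WeilR) (ρ (⟨-1, false⟩ : WeilR) v) = v := by
      rw [← Module.End.mul_apply, ← map_mul, hk, map_one]
      rfl
    have h2 : ρ (⟨-1, false⟩ : WeilR) v = ρ jW w := by
      rw [hwdef, ← Module.End.mul_apply, ← map_mul, hjW, WeilR.j_mul_j]
    rw [h2, hw, map_zero] at h1
    rw [← h1, map_zero]
  have hρzw : ∀ z : ℂˣ, ρ ⟨z, false⟩ w = χ (conjU z) • w := by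
    intro z
    have h1 : (⟨z, false⟩ : WeilR) * jW = jW * ⟨conjU z, false⟩ := by
      rw [hjW, WeilR.f_mul_j, WeilR.j_mul_f, conjU_conjU]
    calc ρ ⟨z, false⟩ w = ρ (⟨z, false⟩ * jW) v := by rw [map_mul]; rfl
      _ = ρ jW (ρ ⟨conjU z, false⟩ v) := by rw [h1, map_mul]; rfl
      _ = χ (conjU z) • w := by rw [hχ, map_smul]
  have hρjw : ρ jW w = χ (-1) • v := by
    calc ρ jW w = ρ (jW * jW) v := by rw [map_mul]; rfl
      _ = ρ ⟨-1, false⟩ v := by rw [hjW, WeilR.j_mul_j]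
      _ = χ (-1) • v := hχ (-1)
  -- span of v, w is everything
  have hgen : ∀ g : WeilR, ρ g v ∈ Submodule.span ℂ {v, w} ∧
      ρ g w ∈ Submodule.span ℂ {v, w} := by
    rintro ⟨z, b⟩
    have hvmem : v ∈ Submodule.span ℂ {v, w} :=
      Submodule.subset_span (Set.mem_insert _ _)
    have hwmem : w ∈ Submodule.span ℂ {v, w} :=
      Submodule.subset_span (Set.mem_insert_of_mem _ rfl)
    cases b
    · constructor
      · rw [hχ]; exact Submodule.smul_mem _ _ hvmem
      · rw [hρzw]; exact Submodule.smul_mem _ _ hwmem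
    · have hsplit : (⟨z, true⟩ : WeilR) = ⟨z, false⟩ * jW := (WeilR.f_mul_j z).symm
      constructor
      · rw [hsplit, map_mul, Module.End.mul_apply, ← hwdef, hρzw]
        exact Submodule.smul_mem _ _ hwmem
      · rw [hsplit, map_mul, Module.End.mul_apply, hρjw, map_smul, hχ]
        rw [smul_smul]
        exact Submodule.smul_mem _ _ hvmem
  have hUtop : Submodule.span ℂ {v, w} = ⊤ := by
    rcases hirr (Submodule.span ℂ {v, w})
      (span_invariant ρ {v, w} (by rintro g x (rfl | rfl)
                                   exacts [(hgen g).1, (hgen g).2])) with h | h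
    · exfalso
      apply hv0
      have : v ∈ Submodule.span ℂ ({v, w} : Set (Fin d → ℂ)) :=
        Submodule.subset_span (Set.mem_insert _ _)
      rw [h] at this
      simpa using this
    · exact h
  by_cases hdep : w ∈ Submodule.span ℂ {v}
  · -- one-dimensional case
    obtain ⟨a, ha⟩ := Submodule.mem_span_singleton.mp hdep
    have hcanw : ∀ x y : ℂ, x • w = y • w → x = y := by
      intro x y h
      by_contra hne
      apply hw0
      have h1 : (x - y) • w = 0 := by rw [sub_smul, h, sub_self]
      rcases smul_eq_zero.mp h1 with h2 | h2
      · exact absurd (sub_eq_zero.mp h2) hne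
      · exact h2
    have hχconj : ∀ z : ℂˣ, χ (conjU z) = χ z := by
      intro z
      apply hcanw
      rw [← hρzw]
      have h1 : ρ ⟨z, false⟩ w = χ z • w := by
        rw [← ha, map_smul, hχ, smul_smul, smul_smul, mul_comm a]
      rw [h1]
    -- n = 0
    have hn0 : n = 0 := by
      by_contra hne
      have hnR : (n : ℝ) ≠ 0 := Int.cast_ne_zero.mpr hne
      have hnC : (n : ℂ) ≠ 0 := Int.cast_ne_zero.mpr hne
      set θ : ℝ := Real.pi / (2 * n) with hθdef
      have h1 : χ (uexp ((θ:ℂ) * I)) = Complex.exp ((Real.pi : ℂ) / 2 * I) := by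
        rw [hθform θ]
        congr 1
        rw [hθdef]
        push_cast
        field_simp
      have h2 : χ (uexp ((θ:ℂ) * I)) = Complex.exp (-((Real.pi : ℂ) / 2 * I)) := by
        have h3 := hχconj (uexp (((-θ : ℝ):ℂ) * I))
        rw [conjU_uexp] at h3
        rw [neg_neg] at h3
        rw [h3, hθform (-θ)]
        congr 1
        rw [hθdef]
        push_cast
        field_simp
      have h4 := h1.symm.trans h2
      have h5 := congrArg (· * Complex.exp ((Real.pi : ℂ) / 2 * I)) h4
      simp only [← Complex.exp_add] at h5
      rw [show ((Real.pi : ℂ) / 2 * I) + ((Real.pi : ℂ) / 2 * I) = (Real.pi : ℂ) * I by ring,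
        show -((Real.pi : ℂ) / 2 * I) + ((Real.pi : ℂ) / 2 * I) = 0 by ring,
        Complex.exp_pi_mul_I, Complex.exp_zero] at h5
      norm_num at h5
    -- χ z = |z|^c
    have hχabs : ∀ z : ℂˣ, χ z = ((‖(z:ℂ)‖ : ℝ) : ℂ) ^ c := by
      intro z
      rw [hform z, hn0, zpow_zero, mul_one]
    have hχm1 : χ (-1) = 1 := by
      rw [hχabs]
      norm_num
    have haa : a * a = 1 := by
      have h1 : ρ jW w = (a * a) • v := by
        conv_lhs => rw [← ha]
        rw [map_smul, ← hwdef, ← ha, smul_smul]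
      apply hcan
      rw [← h1, hρjw, hχm1]
    have hspan : Submodule.span ℂ {v} = ⊤ := by
      apply le_antisymm le_top
      rw [← hUtop]
      apply Submodule.span_le.mpr
      rintro x (rfl | rfl)
      · exact Submodule.mem_span_singleton_self _
      · exact Submodule.mem_span_singleton.mpr ⟨a, ha⟩
    have hd1 : d = 1 := by
      have h1 : finrank ℂ (Fin d → ℂ) = 1 := by
        rw [← finrank_top ℂ (Fin d → ℂ), ← hspan, finrank_span_singleton hv0]
      rwa [Module.finrank_fin_fun] at h1
    refine ⟨Or.inl hd1, Or.inl ⟨c / 2, if a = -1 then true else false, ?_⟩⟩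
    intro g u
    have hu : u ∈ Submodule.span ℂ {v} := hspan ▸ Submodule.mem_top
    obtain ⟨t, ht⟩ := Submodule.mem_span_singleton.mp hu
    have hgv : ρ g v = wchar (c/2) (if a = -1 then true else false) g • v := by
      obtain ⟨z, b⟩ := g
      have habs : (0:ℝ) < ‖(z:ℂ)‖ := norm_pos_iff.mpr z.ne_zero
      have hwc : (((‖(z:ℂ)‖ ^ 2 : ℝ)) : ℂ) ^ (c/2)
          = ((‖(z:ℂ)‖ : ℝ) : ℂ) ^ c := cpow_sq_half _ habs c
      cases b
      · rw [hχ z, wchar]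
        rw [hwc, ← hχabs]
        have : (if (if a = -1 then true else false) then
            (if ({ z := z, j := false } : WeilR).j then (-1:ℂ) else 1) else 1) = 1 := by
          cases (if a = -1 then true else false) <;> simp
        rw [this, mul_one]
      · have hsplit : (⟨z, true⟩ : WeilR) = ⟨z, false⟩ * jW := (WeilR.f_mul_j z).symm
        have hLHS : ρ ⟨z, true⟩ v = (a * χ z) • v := by
          rw [hsplit, map_mul, Module.End.mul_apply, ← hwdef, ← ha, map_smul, hχ, smul_smul]
        rw [hLHS, wchar]
        rw [hwc, ← hχabs]
        have hfac : (if (if a = -1 then true else false) then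
            (if ({ z := z, j := true } : WeilR).j then (-1:ℂ) else 1) else 1) = a := by
          rcases mul_self_eq_one_iff.mp haa with h1 | h1
          · subst h1
            rw [if_neg (by norm_num : ¬(1:ℂ) = -1)]
            simp
          · subst h1
            simp
        rw [hfac, mul_comm (χ z) a]
    rw [← ht, map_smul, hgv, smul_smul, smul_smul, mul_comm]
  · -- two-dimensional case
    have hpair : ∀ x y : ℂ, x • v + y • w = 0 → x = 0 ∧ y = 0 := by
      intro x y h
      by_cases hy : y = 0
      · subst hy
        rw [zero_smul, add_zero] at h
        rcases smul_eq_zero.mp h with h2 | h2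
        · exact ⟨h2, rfl⟩
        · exact absurd h2 hv0
      · exfalso
        apply hdep
        have hwv : w = (-(x/y)) • v := by
          have h1 : y • w = -(x • v) := by
            rw [eq_neg_iff_add_eq_zero, add_comm]
            exact h
          have h2 : w = y⁻¹ • (y • w) := by rw [smul_smul, inv_mul_cancel₀ hy, one_smul]
          rw [h2, h1, smul_neg, smul_smul]
          rw [← neg_smul]
          congr 1
          field_simp
        exact Submodule.mem_span_singleton.mpr ⟨-(x/y), hwv.symm⟩
    -- d = 2
    set f : (Fin 2 → ℂ) →ₗ[ℂ] (Fin d → ℂ) :=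
      (LinearMap.proj 0).smulRight v + (LinearMap.proj 1).smulRight w with hfdef
    have hfapply : ∀ u : Fin 2 → ℂ, f u = u 0 • v + u 1 • w := by
      intro u
      simp [hfdef]
    have hfinj : Function.Injective f := by
      intro x y hxy
      have h0 : f (x - y) = 0 := by rw [map_sub, hxy, sub_self]
      rw [hfapply] at h0
      have := hpair ((x - y) 0) ((x - y) 1) (by simpa using h0)
      funext i
      fin_cases i
      · have h1 := this.1
        simp only [Pi.sub_apply] at h1
        exact sub_eq_zero.mp h1
      · have h1 := this.2
        simp only [Pi.sub_apply] at h1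
        exact sub_eq_zero.mp h1
    have hfsurj : Function.Surjective f := by
      rw [← LinearMap.range_eq_top]
      apply le_antisymm le_top
      rw [← hUtop]
      apply Submodule.span_le.mpr
      rintro x (rfl | rfl)
      · exact ⟨![1, 0], by rw [hfapply]; simp⟩
      · exact ⟨![0, 1], by rw [hfapply]; simp⟩
    have hd2 : d = 2 := by
      have h1 := LinearEquiv.finrank_eq (LinearEquiv.ofBijective f ⟨hfinj, hfsurj⟩)
      rw [Module.finrank_fin_fun, Module.finrank_fin_fun] at h1
      omega
    subst hd2
    -- n ≠ 0
    have hχconj : ∀ z : ℂˣ, χ (conjU z) = cchar c (-n) z := by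
      intro z
      rw [hform', cchar_conj]
    have hnne : n ≠ 0 := by
      intro hn0
      have hχc : ∀ z : ℂˣ, χ (conjU z) = χ z := by
        intro z
        rw [hχconj, hform', hn0, neg_zero]
      have hχm1 : χ (-1) = 1 := by
        rw [hform', hn0, cchar_neg_one]
        norm_num
      have hvw0 : v + w ≠ 0 := by
        intro h
        have := hpair 1 1 (by rw [one_smul, one_smul]; exact h)
        exact one_ne_zero this.1
      have hsmul : ∀ g : WeilR, ρ g (v + w) ∈ Submodule.span ℂ {v + w} := by
        rintro ⟨z, b⟩
        cases b
        · rw [map_add, hχ, hρzw, hχc, ← smul_add]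
          exact Submodule.smul_mem _ _ (Submodule.mem_span_singleton_self _)
        · have hsplit : (⟨z, true⟩ : WeilR) = ⟨z, false⟩ * jW := (WeilR.f_mul_j z).symm
          rw [hsplit, map_mul, Module.End.mul_apply, map_add, ← hwdef, hρjw, hχm1, one_smul,
            map_add, hχ, hρzw, hχc, ← smul_add]
          rw [show (w + v) = (v + w) from add_comm w v]
          exact Submodule.smul_mem _ _ (Submodule.mem_span_singleton_self _)
      rcases hirr (Submodule.span ℂ {v + w})
        (span_invariant ρ {v + w} (by rintro g x rfl; exact hsmul g)) with h | h
      · apply hvw0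
        have : v + w ∈ Submodule.span ℂ ({v + w} : Set (Fin 2 → ℂ)) :=
          Submodule.mem_span_singleton_self _
        rw [h] at this
        simpa using this
      · have hvmem : v ∈ Submodule.span ℂ ({v + w} : Set (Fin 2 → ℂ)) :=
          h ▸ Submodule.mem_top
        obtain ⟨t, ht⟩ := Submodule.mem_span_singleton.mp hvmem
        have h1 : (t - 1) • v + t • w = 0 := by
          rw [smul_add] at ht
          rw [sub_smul, one_smul]
          have h3 : t • v - v + t • w = (t • v + t • w) - v := by abel
          rw [h3, ht, sub_self]
        have h2 := hpair _ _ h1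
        rw [h2.2] at h2
        norm_num at h2
    -- build the induced rep
    rcases lt_or_gt_of_ne hnne with hneg | hpos
    · obtain ⟨s₁, s₂, hs, ρ', hind, hequiv⟩ := build_ind ρ c n v
        (fun z => by rw [hχ z, hform' z])
        (fun x y h => hpair x y h)
      exact ⟨Or.inr rfl, Or.inr ⟨s₁, s₂, n, hs, hneg, ρ', hind, hequiv⟩⟩
    · -- use w as the eigenvector, with character cchar c (-n)
      have hχm1ne : χ (-1) ≠ 0 := by
        rw [hform']
        exact cchar_ne_zero_neg_one c n
      obtain ⟨s₁, s₂, hs, ρ', hind, hequiv⟩ := build_ind ρ c (-n) w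
        (fun z => by rw [hρzw z, hχconj z])
        (by
          intro x y h
          rw [hρjw] at h
          have h1 : (y * χ (-1)) • v + x • w = 0 := by
            rw [← h, smul_smul, mul_comm y]
            abel
          have h2 := hpair _ _ h1
          refine ⟨h2.2, ?_⟩
          rcases mul_eq_zero.mp h2.1 with h3 | h3
          · exact h3
          · exact absurd h3 hχm1ne)
      refine ⟨Or.inr rfl, Or.inr ⟨s₁, s₂, -n, hs, by omega, ρ', hind, hequiv⟩⟩

/-- Every irreducible finite-dimensional continuous complex representation of `W_ℝ` has
dimension 1 or 2; up to equivalence it is either a character `W(s,ε)` (`s ∈ ℂ`,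
`ε ∈ {0,1}`) or an induced representation `V(s₁,s₂)` with `s₂ − s₁` a positive integer
(i.e. `n = s₁ − s₂ < 0`).  Moreover `W(s,ε)` is unitary iff `s ∈ iℝ`, and `V(s₁,s₂)`
is unitary iff `s₁ + s₂ ∈ iℝ`. -/
theorem irreducible_rep_weilR_classification (d : ℕ)
    (ρ : Representation ℂ WeilR (Fin d → ℂ))
    (hcont : Continuous fun p : WeilR × (Fin d → ℂ) => ρ p.1 p.2)
    (hirr : RepIrreducible ρ) (hd : 0 < d) :
    (d = 1 ∨ d = 2) ∧
    ((∃ (s : ℂ) (ε : Bool), ∀ (g : WeilR) (v : Fin d → ℂ), ρ g v = wchar s ε g • v) ∨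
      (∃ (s₁ s₂ : ℂ) (n : ℤ), (n : ℂ) = s₁ - s₂ ∧ n < 0 ∧
        ∃ ρ' : Representation ℂ WeilR (Fin 2 → ℂ),
          IsIndRep s₁ s₂ n ρ' ∧ RepEquiv ρ ρ')) ∧
    (∀ (s : ℂ) (ε : Bool) (ρ₁ : Representation ℂ WeilR (Fin 1 → ℂ)),
      (∀ (g : WeilR) (v : Fin 1 → ℂ), ρ₁ g v = wchar s ε g • v) →
      (IsUnitarizable ρ₁ ↔ s.re = 0)) ∧
    (∀ (s₁ s₂ : ℂ) (n : ℤ), (n : ℂ) = s₁ - s₂ → n < 0 →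
      ∀ ρ' : Representation ℂ WeilR (Fin 2 → ℂ), IsIndRep s₁ s₂ n ρ' →
        (IsUnitarizable ρ' ↔ (s₁ + s₂).re = 0)) := by
  obtain ⟨h1, h2⟩ := classification d ρ hcont hirr hd
  exact ⟨h1, h2, fun s ε ρ₁ hform => partC s ε ρ₁ hform,
    fun s₁ s₂ n hn hneg ρ' hind => partD s₁ s₂ n hn hneg ρ' hind⟩
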